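/- For all switching rates λ, μ ∈ (0,∞) and every t > 0, the map (u,h) ↦ I_{1,t}(u,h) is uniformly continuous on [0,1] × [0,1]; equivalently, with Δ_I(η,ε) := max over u,h ∈ [0,1], u' ∈ [u−η, u+η] ∩ [0,1], h' ∈ [h−ε, h+ε] ∩ [0,1] of |I_{1,t}(u,h) − I_{1,t}(u',h')|, one has Δ_I(η,ε) → 0 as (η,ε) → (0,0). -/

import Mathlib

noncomputable section

open MeasureTheory Real Filter

set_option linter.unusedSectionVars false
set_option maxHeartbeats 1000000

/-- Probability that an initially inactive edge is active at time `t`. -/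
def p01 (lam mu t : ℝ) : ℝ := (lam - lam * Real.exp (-(t * (lam + mu)))) / (lam + mu)

/-- Probability that an initially active edge is active at time `t`. -/
def p11 (lam mu t : ℝ) : ℝ := (lam + mu * Real.exp (-(t * (lam + mu)))) / (lam + mu)

/-- The cumulant-type function `J_{t,v}(u)`. -/
def Jfun (lam mu t v u : ℝ) : ℝ :=
  u * Real.log (1 - p11 lam mu t + Real.exp v * p11 lam mu t) +
  (1 - u) * Real.log (1 - p01 lam mu t + Real.exp v * p01 lam mu t)

/-- The one-step rate function `I_{1,t}(u,x) = sup_v [v x - J_{t,v}(u)]`. -/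
def I1 (lam mu t u x : ℝ) : ℝ := ⨆ v : ℝ, (v * x - Jfun lam mu t v u)


def Afun (p v : ℝ) : ℝ := Real.log (1 - p + Real.exp v * p)
def Jg (p q v u : ℝ) : ℝ := u * Afun q v + (1 - u) * Afun p v
def Ig (p q u x : ℝ) : ℝ := ⨆ v : ℝ, (v * x - Jg p q v u)

def Mc (p q : ℝ) : ℝ := -Real.log p - Real.log q - Real.log (1-p) - Real.log (1-q)
def cfun (p q u : ℝ) : ℝ := -(u * Real.log q + (1 - u) * Real.log p)
def dfun (p q u : ℝ) : ℝ := -(u * Real.log (1 - q) + (1 - u) * Real.log (1 - p))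
def Kc (p q : ℝ) : ℝ := (1 - q)/q + (1 - p)/p
def Kd (p q : ℝ) : ℝ := q/(1-q) + p/(1-p)

variable {p q v u x : ℝ}

lemma arg_pos (hp0 : 0 < p) (hp1 : p < 1) (v : ℝ) : 0 < 1 - p + Real.exp v * p := by
  have := Real.exp_pos v; nlinarith

lemma A_ge_right (hp0 : 0 < p) (hp1 : p < 1) (v : ℝ) : v + Real.log p ≤ Afun p v := by
  have h1 : Real.exp v * p ≤ 1 - p + Real.exp v * p := by nlinarith [Real.exp_pos v]
  have h2 : Real.log (Real.exp v * p) ≤ Afun p v :=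
    Real.log_le_log (by positivity) h1
  rwa [Real.log_mul (Real.exp_ne_zero v) hp0.ne', Real.log_exp] at h2

lemma A_ge_left (hp0 : 0 < p) (hp1 : p < 1) (v : ℝ) : Real.log (1 - p) ≤ Afun p v := by
  have h1 : 1 - p ≤ 1 - p + Real.exp v * p := by nlinarith [Real.exp_pos v]
  exact Real.log_le_log (by linarith) h1

lemma A_le_max (hp0 : 0 < p) (hp1 : p < 1) (v : ℝ) : Afun p v ≤ max v 0 := by
  have h : 1 - p + Real.exp v * p ≤ Real.exp (max v 0) := by
    rcases le_total v 0 with h | h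
    · have h1 : Real.exp v ≤ 1 := Real.exp_le_one_iff.mpr h
      rw [max_eq_right h, Real.exp_zero]; nlinarith
    · have h1 : (1:ℝ) ≤ Real.exp v := Real.one_le_exp h
      rw [max_eq_left h]; nlinarith
  calc Afun p v ≤ Real.log (Real.exp (max v 0)) := Real.log_le_log (arg_pos hp0 hp1 v) h
    _ = max v 0 := Real.log_exp _

lemma A_zero (p : ℝ) : Afun p 0 = 0 := by
  simp [Afun]

lemma A_le_hi (hp0 : 0 < p) (hp1 : p < 1) (v : ℝ) :
    Afun p v ≤ v + Real.log p + Real.exp (-v) * ((1-p)/p) := by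
  have hep := Real.exp_pos v
  have key : Real.log ((1 - p + Real.exp v * p) / (Real.exp v * p)) ≤
      (1 - p + Real.exp v * p) / (Real.exp v * p) - 1 :=
    Real.log_le_sub_one_of_pos (div_pos (arg_pos hp0 hp1 v) (by positivity))
  have hrw : Real.log ((1 - p + Real.exp v * p) / (Real.exp v * p)) =
      Afun p v - (v + Real.log p) := by
    rw [Real.log_div (arg_pos hp0 hp1 v).ne' (by positivity), Real.log_mul (Real.exp_ne_zero v) hp0.ne',
      Real.log_exp, Afun]
  have hval : (1 - p + Real.exp v * p) / (Real.exp v * p) - 1 = Real.exp (-v) * ((1-p)/p) := by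
    rw [Real.exp_neg]; field_simp; ring
  rw [hrw, hval] at key; linarith

lemma A_le_lo (hp0 : 0 < p) (hp1 : p < 1) (v : ℝ) :
    Afun p v ≤ Real.log (1-p) + Real.exp v * (p/(1-p)) := by
  have hep := Real.exp_pos v
  have h1p : (0:ℝ) < 1 - p := by linarith
  have key : Real.log ((1 - p + Real.exp v * p) / (1-p)) ≤
      (1 - p + Real.exp v * p) / (1-p) - 1 :=
    Real.log_le_sub_one_of_pos (by positivity)
  have hrw : Real.log ((1 - p + Real.exp v * p) / (1-p)) = Afun p v - Real.log (1-p) := by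
    rw [Real.log_div (arg_pos hp0 hp1 v).ne' h1p.ne', Afun]
  have hval : (1 - p + Real.exp v * p) / (1-p) - 1 = Real.exp v * (p/(1-p)) := by
    field_simp; ring
  rw [hrw, hval] at key; linarith

section Jbounds
variable (hp0 : 0 < p) (hp1 : p < 1) (hq0 : 0 < q) (hq1 : q < 1)
  (hu : u ∈ Set.Icc (0:ℝ) 1)

include hp0 hp1 hq0 hq1

lemma logp_neg : Real.log p < 0 := Real.log_neg hp0 hp1
lemma log1p_neg : Real.log (1-p) < 0 := Real.log_neg (by linarith) (by linarith)

lemma Mc_pos : 0 < Mc p q := by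
  have := Real.log_neg hp0 hp1; have := Real.log_neg hq0 hq1
  have : Real.log (1-p) < 0 := Real.log_neg (by linarith) (by linarith)
  have : Real.log (1-q) < 0 := Real.log_neg (by linarith) (by linarith)
  unfold Mc; linarith [Real.log_neg hp0 hp1, Real.log_neg hq0 hq1,
    Real.log_neg (show (0:ℝ) < 1-p by linarith) (show (1:ℝ)-p < 1 by linarith),
    Real.log_neg (show (0:ℝ) < 1-q by linarith) (show (1:ℝ)-q < 1 by linarith)]

lemma Kc_pos : 0 < Kc p q := by
  have h1 : (0:ℝ) < 1 - p := by linarith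
  have h2 : (0:ℝ) < 1 - q := by linarith
  unfold Kc; positivity

lemma Kd_pos : 0 < Kd p q := by
  have h1 : (0:ℝ) < 1 - p := by linarith
  have h2 : (0:ℝ) < 1 - q := by linarith
  unfold Kd; positivity

include hu

lemma cfun_nonneg : 0 ≤ cfun p q u := by
  have h1 := Real.log_neg hp0 hp1; have h2 := Real.log_neg hq0 hq1
  unfold cfun; nlinarith [hu.1, hu.2]

lemma dfun_nonneg : 0 ≤ dfun p q u := by
  have h1 := Real.log_neg (show (0:ℝ) < 1-p by linarith) (show (1:ℝ)-p < 1 by linarith)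
  have h2 := Real.log_neg (show (0:ℝ) < 1-q by linarith) (show (1:ℝ)-q < 1 by linarith)
  unfold dfun; nlinarith [hu.1, hu.2]

lemma cfun_le_Mc : cfun p q u ≤ Mc p q := by
  have h1 := Real.log_neg hp0 hp1; have h2 := Real.log_neg hq0 hq1
  have h3 := Real.log_neg (show (0:ℝ) < 1-p by linarith) (show (1:ℝ)-p < 1 by linarith)
  have h4 := Real.log_neg (show (0:ℝ) < 1-q by linarith) (show (1:ℝ)-q < 1 by linarith)
  unfold cfun Mc; nlinarith [hu.1, hu.2]

lemma dfun_le_Mc : dfun p q u ≤ Mc p q := by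
  have h1 := Real.log_neg hp0 hp1; have h2 := Real.log_neg hq0 hq1
  have h3 := Real.log_neg (show (0:ℝ) < 1-p by linarith) (show (1:ℝ)-p < 1 by linarith)
  have h4 := Real.log_neg (show (0:ℝ) < 1-q by linarith) (show (1:ℝ)-q < 1 by linarith)
  unfold dfun Mc; nlinarith [hu.1, hu.2]

/-- `J ≥ v - c(u)` -/
lemma Jg_ge_lin (v : ℝ) : v - cfun p q u ≤ Jg p q v u := by
  have h1 := A_ge_right hq0 hq1 v
  have h2 := A_ge_right hp0 hp1 v
  have e1 : u * (v + Real.log q) ≤ u * Afun q v :=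
    mul_le_mul_of_nonneg_left h1 hu.1
  have e2 : (1-u) * (v + Real.log p) ≤ (1-u) * Afun p v :=
    mul_le_mul_of_nonneg_left h2 (by linarith [hu.2])
  unfold Jg cfun; nlinarith

/-- `J ≥ -d(u)` -/
lemma Jg_ge_const (v : ℝ) : -(dfun p q u) ≤ Jg p q v u := by
  have h1 := A_ge_left hq0 hq1 v
  have h2 := A_ge_left hp0 hp1 v
  have e1 : u * Real.log (1-q) ≤ u * Afun q v := mul_le_mul_of_nonneg_left h1 hu.1
  have e2 : (1-u) * Real.log (1-p) ≤ (1-u) * Afun p v :=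
    mul_le_mul_of_nonneg_left h2 (by linarith [hu.2])
  unfold Jg dfun; nlinarith

/-- `J ≤ v - c(u) + e^{-v} Kc` -/
lemma Jg_le_hi (v : ℝ) : Jg p q v u ≤ v - cfun p q u + Real.exp (-v) * Kc p q := by
  have h1 := A_le_hi hq0 hq1 v
  have h2 := A_le_hi hp0 hp1 v
  have e1 : u * Afun q v ≤ u * (v + Real.log q + Real.exp (-v) * ((1-q)/q)) :=
    mul_le_mul_of_nonneg_left h1 hu.1
  have e2 : (1-u) * Afun p v ≤ (1-u) * (v + Real.log p + Real.exp (-v) * ((1-p)/p)) :=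
    mul_le_mul_of_nonneg_left h2 (by linarith [hu.2])
  have hKq : (0:ℝ) ≤ (1-q)/q := by
    have : (0:ℝ) < 1 - q := by linarith
    positivity
  have hKp : (0:ℝ) ≤ (1-p)/p := by
    have : (0:ℝ) < 1 - p := by linarith
    positivity
  have hE := (Real.exp_pos (-v)).le
  have hu1 : (0:ℝ) ≤ 1 - u := by linarith [hu.2]
  unfold Jg cfun Kc
  nlinarith [mul_nonneg (mul_nonneg hE hu1) hKq, mul_nonneg (mul_nonneg hE hu.1) hKp]

/-- `J ≤ -d(u) + e^{v} Kd` -/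
lemma Jg_le_lo (v : ℝ) : Jg p q v u ≤ -(dfun p q u) + Real.exp v * Kd p q := by
  have h1 := A_le_lo hq0 hq1 v
  have h2 := A_le_lo hp0 hp1 v
  have e1 : u * Afun q v ≤ u * (Real.log (1-q) + Real.exp v * (q/(1-q))) :=
    mul_le_mul_of_nonneg_left h1 hu.1
  have e2 : (1-u) * Afun p v ≤ (1-u) * (Real.log (1-p) + Real.exp v * (p/(1-p))) :=
    mul_le_mul_of_nonneg_left h2 (by linarith [hu.2])
  have hKq : (0:ℝ) ≤ q/(1-q) := by
    have : (0:ℝ) < 1 - q := by linarith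
    positivity
  have hKp : (0:ℝ) ≤ p/(1-p) := by
    have : (0:ℝ) < 1 - p := by linarith
    positivity
  have hE := (Real.exp_pos v).le
  have hu1 : (0:ℝ) ≤ 1 - u := by linarith [hu.2]
  unfold Jg dfun Kd
  nlinarith [mul_nonneg (mul_nonneg hE hu1) hKq, mul_nonneg (mul_nonneg hE hu.1) hKp]


lemma g_le_Mc (hx : x ∈ Set.Icc (0:ℝ) 1) (v : ℝ) : v * x - Jg p q v u ≤ Mc p q := by
  rcases le_total 0 v with hv | hv
  · have h1 := Jg_ge_lin hp0 hp1 hq0 hq1 hu v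
    have h2 := cfun_le_Mc hp0 hp1 hq0 hq1 hu
    nlinarith [hx.1, hx.2]
  · have h1 := Jg_ge_const hp0 hp1 hq0 hq1 hu v
    have h2 := dfun_le_Mc hp0 hp1 hq0 hq1 hu
    nlinarith [hx.1, hx.2]

lemma Ig_bdd (hx : x ∈ Set.Icc (0:ℝ) 1) :
    BddAbove (Set.range fun v => v * x - Jg p q v u) := by
  refine ⟨Mc p q, ?_⟩
  rintro y ⟨v, rfl⟩
  exact g_le_Mc hp0 hp1 hq0 hq1 hu hx v

lemma Ig_nonneg (hx : x ∈ Set.Icc (0:ℝ) 1) : 0 ≤ Ig p q u x := by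
  refine le_trans ?_ (le_ciSup (Ig_bdd hp0 hp1 hq0 hq1 hu hx) 0)
  simp [Jg, A_zero]

lemma Ig_le_Mc (hx : x ∈ Set.Icc (0:ℝ) 1) : Ig p q u x ≤ Mc p q :=
  ciSup_le (g_le_Mc hp0 hp1 hq0 hq1 hu hx)

omit hu in
lemma A_diff (v : ℝ) : |Afun q v - Afun p v| ≤ Mc p q := by
  have hlp := Real.log_neg hp0 hp1
  have hlq := Real.log_neg hq0 hq1
  have hl1p := Real.log_neg (show (0:ℝ) < 1-p by linarith) (show (1:ℝ)-p < 1 by linarith)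
  have hl1q := Real.log_neg (show (0:ℝ) < 1-q by linarith) (show (1:ℝ)-q < 1 by linarith)
  have hqmax := A_le_max hq0 hq1 v
  have hpmax := A_le_max hp0 hp1 v
  have hpl : max v 0 + Real.log p + Real.log (1-p) ≤ Afun p v := by
    rcases le_total 0 v with hv | hv
    · have := A_ge_right hp0 hp1 v
      rw [max_eq_left hv]; linarith
    · have := A_ge_left hp0 hp1 v
      rw [max_eq_right hv]; linarith
  have hql : max v 0 + Real.log q + Real.log (1-q) ≤ Afun q v := by
    rcases le_total 0 v with hv | hv
    · have := A_ge_right hq0 hq1 v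
      rw [max_eq_left hv]; linarith
    · have := A_ge_left hq0 hq1 v
      rw [max_eq_right hv]; linarith
  rw [abs_le]
  constructor
  · unfold Mc; nlinarith
  · unfold Mc; nlinarith

/-- one-sided Lipschitz in `u` -/
lemma Ig_u_lip (hu' : u' ∈ Set.Icc (0:ℝ) 1) (hx : x ∈ Set.Icc (0:ℝ) 1) :
    Ig p q u x ≤ Ig p q u' x + Mc p q * |u - u'| := by
  refine ciSup_le fun v => ?_
  have h1 : v * x - Jg p q v u' ≤ Ig p q u' x :=
    le_ciSup (Ig_bdd hp0 hp1 hq0 hq1 hu' hx) v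
  have h2 : Jg p q v u' - Jg p q v u = (u' - u) * (Afun q v - Afun p v) := by
    unfold Jg; ring
  have h3 : (u' - u) * (Afun q v - Afun p v) ≤ Mc p q * |u - u'| := by
    calc (u' - u) * (Afun q v - Afun p v) ≤ |(u' - u) * (Afun q v - Afun p v)| := le_abs_self _
      _ = |u - u'| * |Afun q v - Afun p v| := by rw [abs_mul, abs_sub_comm]
      _ ≤ |u - u'| * Mc p q := mul_le_mul_of_nonneg_left (A_diff hp0 hp1 hq0 hq1 v) (abs_nonneg _)
      _ = Mc p q * |u - u'| := mul_comm _ _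
  linarith

/-- interior Lipschitz in `x` -/
lemma Ig_int (hγ : 0 < γ) (hx' : x' ∈ Set.Icc γ (1-γ)) (hx : x ∈ Set.Icc (0:ℝ) 1) :
    Ig p q u x' ≤ Ig p q u x + (Mc p q / γ) * |x' - x| := by
  have hM := Mc_pos hp0 hp1 hq0 hq1
  have hInn : 0 ≤ Ig p q u x := Ig_nonneg hp0 hp1 hq0 hq1 hu hx
  refine ciSup_le fun v => ?_
  rcases le_or_gt (|v|) (Mc p q / γ) with hv | hv
  · have h1 : v * x - Jg p q v u ≤ Ig p q u x :=
      le_ciSup (Ig_bdd hp0 hp1 hq0 hq1 hu hx) v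
    have h2 : v * (x' - x) ≤ (Mc p q / γ) * |x' - x| := by
      calc v * (x' - x) ≤ |v * (x' - x)| := le_abs_self _
        _ = |v| * |x' - x| := abs_mul _ _
        _ ≤ (Mc p q / γ) * |x' - x| := mul_le_mul_of_nonneg_right hv (abs_nonneg _)
    nlinarith
  · have habs : 0 ≤ (Mc p q / γ) * |x' - x| := by positivity
    rcases le_total 0 v with hvp | hvn
    · -- v > Mc/γ
      have hvv : Mc p q / γ < v := by rwa [abs_of_nonneg hvp] at hv
      have h1 := Jg_ge_lin hp0 hp1 hq0 hq1 hu v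
      have hc := cfun_le_Mc hp0 hp1 hq0 hq1 hu
      have hx1 : γ ≤ 1 - x' := by linarith [hx'.2]
      have key : v * x' - Jg p q v u ≤ 0 := by
        have e1 : v * x' - Jg p q v u ≤ v * (x' - 1) + cfun p q u := by nlinarith
        have e2 : v * (x' - 1) ≤ -(Mc p q) := by
          have : v * γ ≥ Mc p q := by
            rw [ge_iff_le, ← div_le_iff₀ hγ] ; exact hvv.le
          nlinarith
        linarith
      linarith
    · have hvv : Mc p q / γ < -v := by rwa [abs_of_nonpos hvn] at hv
      have h1 := Jg_ge_const hp0 hp1 hq0 hq1 hu v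
      have hd := dfun_le_Mc hp0 hp1 hq0 hq1 hu
      have key : v * x' - Jg p q v u ≤ 0 := by
        have e2 : v * x' ≤ -(Mc p q) := by
          have h3 : (-v) * γ ≥ Mc p q := by
            rw [ge_iff_le, ← div_le_iff₀ hγ]; exact hvv.le
          have h4 : v * x' ≤ v * γ := by nlinarith [hx'.1]
          nlinarith
        linarith
      linarith


lemma Ig_hi_up (hx : x ∈ Set.Icc (1/2 : ℝ) 1) :
    Ig p q u x ≤ cfun p q u + 2 * Mc p q * (1 - x) := by
  have hM := Mc_pos hp0 hp1 hq0 hq1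
  have hc := cfun_nonneg hp0 hp1 hq0 hq1 hu
  have hcM := cfun_le_Mc hp0 hp1 hq0 hq1 hu
  have hdM := dfun_le_Mc hp0 hp1 hq0 hq1 hu
  refine ciSup_le fun v => ?_
  rcases le_or_gt (-(2 * Mc p q)) v with hv | hv
  · have h1 := Jg_ge_lin hp0 hp1 hq0 hq1 hu v
    nlinarith [hx.2]
  · have h1 := Jg_ge_const hp0 hp1 hq0 hq1 hu v
    have e1 : v * x ≤ v * (1/2) := by nlinarith [hx.1]
    nlinarith [hx.2]

lemma Ig_lo_up (hx : x ∈ Set.Icc (0:ℝ) (1/2)) :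
    Ig p q u x ≤ dfun p q u + 2 * Mc p q * x := by
  have hM := Mc_pos hp0 hp1 hq0 hq1
  have hd := dfun_nonneg hp0 hp1 hq0 hq1 hu
  have hcM := cfun_le_Mc hp0 hp1 hq0 hq1 hu
  refine ciSup_le fun v => ?_
  rcases le_or_gt v (2 * Mc p q) with hv | hv
  · have h1 := Jg_ge_const hp0 hp1 hq0 hq1 hu v
    have e1 : v * x ≤ 2 * Mc p q * x := mul_le_mul_of_nonneg_right hv hx.1
    linarith
  · have h1 := Jg_ge_lin hp0 hp1 hq0 hq1 hu v
    have e1 : v * (x - 1) ≤ v * (-(1/2)) := by nlinarith [hx.2]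
    nlinarith [hx.1]

lemma Ig_hi_lo (hs0 : 0 < s) (hs1 : s ≤ 1/2) (hx1 : 1 - s ≤ x) (hx2 : x ≤ 1) :
    cfun p q u - s * Kc p q + s * Real.log s ≤ Ig p q u x := by
  set v₀ : ℝ := -Real.log s with hv₀
  have hxIcc : x ∈ Set.Icc (0:ℝ) 1 := ⟨by linarith, hx2⟩
  have h1 : v₀ * x - Jg p q v₀ u ≤ Ig p q u x :=
    le_ciSup (Ig_bdd hp0 hp1 hq0 hq1 hu hxIcc) v₀
  have hJ := Jg_le_hi hp0 hp1 hq0 hq1 hu v₀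
  have hexp : Real.exp (-v₀) = s := by
    rw [hv₀, neg_neg, Real.exp_log hs0]
  rw [hexp] at hJ
  have hv₀nn : 0 ≤ v₀ := by
    rw [hv₀]
    have : Real.log s ≤ 0 := Real.log_nonpos hs0.le (by linarith)
    linarith
  have h2 : v₀ * (1 - x) ≤ v₀ * s := mul_le_mul_of_nonneg_left (by linarith) hv₀nn
  have h3 : v₀ * s = -(s * Real.log s) := by rw [hv₀]; ring
  nlinarith

lemma Ig_lo_lo (hs0 : 0 < s) (hs1 : s ≤ 1/2) (hx1 : 0 ≤ x) (hx2 : x ≤ s) :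
    dfun p q u - s * Kd p q + s * Real.log s ≤ Ig p q u x := by
  set v₀ : ℝ := Real.log s with hv₀
  have hxIcc : x ∈ Set.Icc (0:ℝ) 1 := ⟨hx1, by linarith⟩
  have h1 : v₀ * x - Jg p q v₀ u ≤ Ig p q u x :=
    le_ciSup (Ig_bdd hp0 hp1 hq0 hq1 hu hxIcc) v₀
  have hJ := Jg_le_lo hp0 hp1 hq0 hq1 hu v₀
  have hexp : Real.exp v₀ = s := Real.exp_log hs0
  rw [hexp] at hJ
  have hv₀np : v₀ ≤ 0 := Real.log_nonpos hs0.le (by linarith)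
  have h2 : v₀ * s ≤ v₀ * x := by nlinarith
  nlinarith

end Jbounds

lemma neg_slog {s : ℝ} (hs0 : 0 < s) : -(s * Real.log s) ≤ 2 * Real.sqrt s := by
  have hsq : 0 < Real.sqrt s := Real.sqrt_pos.mpr hs0
  have h1 : Real.log (Real.sqrt s)⁻¹ ≤ (Real.sqrt s)⁻¹ - 1 :=
    Real.log_le_sub_one_of_pos (by positivity)
  rw [Real.log_inv] at h1
  have h2 : Real.log s = 2 * Real.log (Real.sqrt s) := by
    rw [Real.log_sqrt hs0.le]; ring
  have hds : s * (Real.sqrt s)⁻¹ = Real.sqrt s := by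
    rw [← div_eq_mul_inv, Real.div_sqrt]
  nlinarith [hs0.le]

lemma Ig_x_cont {p q : ℝ} (hp0 : 0 < p) (hp1 : p < 1) (hq0 : 0 < q) (hq1 : q < 1) :
    ∀ ε > (0:ℝ), ∃ δ > (0:ℝ), ∀ u ∈ Set.Icc (0:ℝ) 1, ∀ h ∈ Set.Icc (0:ℝ) 1,
      ∀ h' ∈ Set.Icc (0:ℝ) 1, |h - h'| ≤ δ → |Ig p q u h - Ig p q u h'| ≤ ε := by
  intro ε hε
  have hM := Mc_pos hp0 hp1 hq0 hq1
  have hKc := Kc_pos hp0 hp1 hq0 hq1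
  have hKd := Kd_pos hp0 hp1 hq0 hq1
  set M := Mc p q with hMdef
  set C1 : ℝ := 6 * M + 3 * Kc p q + 3 * Kd p q with hC1def
  have hC1 : 0 < C1 := by positivity
  set γ : ℝ := min (1/8) (min (ε/(4*C1)) (ε^2/192)) with hγdef
  have hγ : 0 < γ := by
    apply lt_min (by norm_num)
    exact lt_min (by positivity) (by positivity)
  have hγ8 : γ ≤ 1/8 := min_le_left _ _
  have hγC : γ ≤ ε/(4*C1) := le_trans (min_le_right _ _) (min_le_left _ _)
  have hγε : γ ≤ ε^2/192 := le_trans (min_le_right _ _) (min_le_right _ _)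
  refine ⟨min γ (ε*γ/(8*M)), lt_min hγ (by positivity), ?_⟩
  set δ : ℝ := min γ (ε*γ/(8*M)) with hδdef
  have hδγ : δ ≤ γ := min_le_left _ _
  have hδε : δ ≤ ε*γ/(8*M) := min_le_right _ _
  intro u hu h hh h' hh' hdiff
  have hh'b := abs_le.mp hdiff
  -- common bounds for boundary cases
  have hsbound : 2 * M * (3*γ) + (3*γ) * Kc p q - (3*γ) * Real.log (3*γ) ≤ ε ∧
      2 * M * (3*γ) + (3*γ) * Kd p q - (3*γ) * Real.log (3*γ) ≤ ε := by
    have hs0 : (0:ℝ) < 3*γ := by linarith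
    have hlin : 2 * M * (3*γ) + (3*γ) * Kc p q ≤ ε/4 := by
      have : γ * C1 ≤ ε/4 := by
        calc γ * C1 ≤ (ε/(4*C1)) * C1 := mul_le_mul_of_nonneg_right hγC hC1.le
          _ = ε/4 := by field_simp
      nlinarith
    have hlin' : 2 * M * (3*γ) + (3*γ) * Kd p q ≤ ε/4 := by
      have : γ * C1 ≤ ε/4 := by
        calc γ * C1 ≤ (ε/(4*C1)) * C1 := mul_le_mul_of_nonneg_right hγC hC1.le
          _ = ε/4 := by field_simp
      nlinarith
    have hlog : -((3*γ) * Real.log (3*γ)) ≤ ε/4 := by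
      have h1 := neg_slog hs0
      have h2 : Real.sqrt (3*γ) ≤ ε/8 := by
        have h3 : (3:ℝ)*γ ≤ (ε/8)^2 := by nlinarith
        calc Real.sqrt (3*γ) ≤ Real.sqrt ((ε/8)^2) := Real.sqrt_le_sqrt h3
          _ = ε/8 := Real.sqrt_sq (by positivity)
      linarith
    constructor <;> linarith
  by_cases hmid : 2*γ ≤ h ∧ h ≤ 1 - 2*γ
  · -- interior case
    have hhI : h ∈ Set.Icc γ (1-γ) := ⟨by linarith [hmid.1], by linarith [hmid.2]⟩
    have hh'I : h' ∈ Set.Icc γ (1-γ) := ⟨by linarith [hmid.1, hh'b.2], by linarith [hmid.2, hh'b.1]⟩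
    have e1 := Ig_int hp0 hp1 hq0 hq1 hu hγ hhI hh'
    have e2 := Ig_int hp0 hp1 hq0 hq1 hu hγ hh'I hh
    have habs : |h - h'| ≤ δ := hdiff
    have habs' : |h' - h| ≤ δ := by rwa [abs_sub_comm]
    have hMγ : (M/γ) * |h - h'| ≤ ε := by
      have : (M/γ) * |h - h'| ≤ (M/γ) * δ := mul_le_mul_of_nonneg_left habs (by positivity)
      have h9 : (M/γ) * δ ≤ ε/8 := by
        have : (M/γ) * δ ≤ (M/γ) * (ε*γ/(8*M)) := mul_le_mul_of_nonneg_left hδε (by positivity)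
        have heq : (M/γ) * (ε*γ/(8*M)) = ε/8 := by field_simp
        linarith
      linarith
    have hMγ' : (M/γ) * |h' - h| ≤ ε := by rwa [abs_sub_comm h' h]
    rw [abs_sub_le_iff]
    constructor <;> linarith
  · push_neg at hmid
    have hs0 : (0:ℝ) < 3*γ := by linarith
    have hs1 : 3*γ ≤ 1/2 := by linarith
    rcases lt_or_ge h (2*γ) with hlo | hge
    · -- low case : h < 2γ
      have hh3 : h ≤ 3*γ := by linarith
      have hh'3 : h' ≤ 3*γ := by linarith [hh'b.1]
      have hup := Ig_lo_up hp0 hp1 hq0 hq1 hu (x := h) ⟨hh.1, by linarith⟩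
      have hup' := Ig_lo_up hp0 hp1 hq0 hq1 hu (x := h') ⟨hh'.1, by linarith⟩
      have hlo1 := Ig_lo_lo hp0 hp1 hq0 hq1 hu hs0 hs1 hh.1 hh3
      have hlo2 := Ig_lo_lo hp0 hp1 hq0 hq1 hu hs0 hs1 hh'.1 hh'3
      have hb1 : 2 * M * h ≤ 2 * M * (3*γ) :=
        mul_le_mul_of_nonneg_left hh3 (by linarith)
      have hb2 : 2 * M * h' ≤ 2 * M * (3*γ) :=
        mul_le_mul_of_nonneg_left hh'3 (by linarith)
      rw [abs_sub_le_iff]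
      constructor <;> linarith [hsbound.2]
    · -- high case : 1 - 2γ < h
      have hhi := hmid hge
      have hh3 : 1 - 3*γ ≤ h := by linarith
      have hh'3 : 1 - 3*γ ≤ h' := by linarith [hh'b.2]
      have hup := Ig_hi_up hp0 hp1 hq0 hq1 hu (x := h) ⟨by linarith, hh.2⟩
      have hup' := Ig_hi_up hp0 hp1 hq0 hq1 hu (x := h') ⟨by linarith, hh'.2⟩
      have hlo1 := Ig_hi_lo hp0 hp1 hq0 hq1 hu hs0 hs1 hh3 hh.2
      have hlo2 := Ig_hi_lo hp0 hp1 hq0 hq1 hu hs0 hs1 hh'3 hh'.2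
      have hb1 : 2 * M * (1 - h) ≤ 2 * M * (3*γ) :=
        mul_le_mul_of_nonneg_left (by linarith) (by linarith)
      have hb2 : 2 * M * (1 - h') ≤ 2 * M * (3*γ) :=
        mul_le_mul_of_nonneg_left (by linarith) (by linarith)
      rw [abs_sub_le_iff]
      constructor <;> linarith [hsbound.1]

section pfacts
variable {lam mu t : ℝ} (hlam : 0 < lam) (hmu : 0 < mu) (ht : 0 < t)
include hlam hmu ht

lemma exp_fact : Real.exp (-(t * (lam + mu))) < 1 := by
  rw [Real.exp_lt_one_iff]
  nlinarith

lemma p01_pos : 0 < p01 lam mu t := by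
  have h1 := exp_fact hlam hmu ht
  have h2 := Real.exp_pos (-(t * (lam + mu)))
  unfold p01
  apply div_pos (by nlinarith) (by linarith)

lemma p01_lt_one : p01 lam mu t < 1 := by
  have h1 := exp_fact hlam hmu ht
  have h2 := Real.exp_pos (-(t * (lam + mu)))
  unfold p01
  rw [div_lt_one (by linarith)]
  nlinarith

lemma p11_pos : 0 < p11 lam mu t := by
  have h2 := Real.exp_pos (-(t * (lam + mu)))
  unfold p11
  apply div_pos (by nlinarith) (by linarith)

lemma p11_lt_one : p11 lam mu t < 1 := by
  have h1 := exp_fact hlam hmu ht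
  have h2 := Real.exp_pos (-(t * (lam + mu)))
  unfold p11
  rw [div_lt_one (by linarith)]
  nlinarith

end pfacts

theorem stmt_1 (lam mu t : ℝ) (hlam : 0 < lam) (hmu : 0 < mu) (ht : 0 < t) :
    ∀ ε > (0:ℝ), ∃ δ > (0:ℝ),
      ∀ u ∈ Set.Icc (0:ℝ) 1, ∀ h ∈ Set.Icc (0:ℝ) 1,
      ∀ u' ∈ Set.Icc (0:ℝ) 1, ∀ h' ∈ Set.Icc (0:ℝ) 1,
        |u - u'| ≤ δ → |h - h'| ≤ δ →
          |I1 lam mu t u h - I1 lam mu t u' h'| ≤ ε := by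
  have hp0 := p01_pos hlam hmu ht
  have hp1 := p01_lt_one hlam hmu ht
  have hq0 := p11_pos hlam hmu ht
  have hq1 := p11_lt_one hlam hmu ht
  set p := p01 lam mu t
  set q := p11 lam mu t
  have hI : ∀ u x : ℝ, I1 lam mu t u x = Ig p q u x := fun _ _ => rfl
  have hM := Mc_pos hp0 hp1 hq0 hq1
  intro ε hε
  obtain ⟨δ₁, hδ₁, hx⟩ := Ig_x_cont hp0 hp1 hq0 hq1 (ε/2) (by linarith)
  refine ⟨min δ₁ (ε/(2 * Mc p q)), lt_min hδ₁ (by positivity), ?_⟩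
  intro u hu h hh u' hu' h' hh' hdu hdh
  have hdu' : |u - u'| ≤ ε/(2 * Mc p q) := le_trans hdu (min_le_right _ _)
  have hdh' : |h - h'| ≤ δ₁ := le_trans hdh (min_le_left _ _)
  have hxpart : |Ig p q u h - Ig p q u h'| ≤ ε/2 := hx u hu h hh h' hh' hdh'
  have hupart : |Ig p q u h' - Ig p q u' h'| ≤ ε/2 := by
    have e1 := Ig_u_lip hp0 hp1 hq0 hq1 hu (u' := u') hu' hh'
    have e2 := Ig_u_lip hp0 hp1 hq0 hq1 hu' (u' := u) hu hh'
    have hb : Mc p q * |u - u'| ≤ ε/2 := by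
      have : Mc p q * |u - u'| ≤ Mc p q * (ε/(2 * Mc p q)) :=
        mul_le_mul_of_nonneg_left hdu' hM.le
      have heq : Mc p q * (ε/(2 * Mc p q)) = ε/2 := by field_simp
      linarith
    have hb' : Mc p q * |u' - u| ≤ ε/2 := by rwa [abs_sub_comm]
    rw [abs_sub_le_iff]
    constructor <;> linarith
  calc |I1 lam mu t u h - I1 lam mu t u' h'|
      = |(Ig p q u h - Ig p q u h') + (Ig p q u h' - Ig p q u' h')| := by
        rw [hI, hI]; ring_nf
    _ ≤ |Ig p q u h - Ig p q u h'| + |Ig p q u h' - Ig p q u' h'| := abs_add_le _ _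
    _ ≤ ε/2 + ε/2 := add_le_add hxpart hupart
    _ = ε := by ring
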